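/- Let n ≥ 1, let A be a symmetric positive definite real n×n matrix with d = det A, let U be the adjugate (cofactor) matrix of A, and let η be a symmetric real n×n matrix. Let w : (0,∞) → (0,∞) be differentiable and satisfy w′(t) + (1−1/n)·w(t)/t ≤ 0 for all t > 0. Then (w′(d) + w(d)/d)·(trace(Uη))² − (w(d)/d)·trace(UηUη) ≤ (w′(d) + (1−1/n)·w(d)/d)·(trace(Uη))² ≤ 0. -/

import Mathlib

open Set Matrix

section aux
variable {n : ℕ}

lemma my_smul_posSemidef {P : Matrix (Fin n) (Fin n) ℝ} (hP : P.PosSemidef) {c : ℝ}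
    (hc : 0 ≤ c) : (c • P).PosSemidef := by
  refine ⟨?_, fun x => ?_⟩
  · unfold Matrix.IsHermitian
    rw [conjTranspose_smul, hP.1.eq]
    simp
  · exact (hP.smul hc).2 x

lemma trace_sq_le_card_mul_trace_sq (M : Matrix (Fin n) (Fin n) ℝ) (hM : M.IsSymm) :
    (M.trace) ^ 2 ≤ (n : ℝ) * (M * M).trace := by
  have h1 : (M * M).trace = ∑ i, ∑ j, M i j * M j i := by
    simp [Matrix.trace, Matrix.mul_apply, Matrix.diag]
  have h2 : ∀ i j, M j i = M i j := fun i j => by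
    conv_lhs => rw [← hM]
    rfl
  have h3 : ∑ i : Fin n, (M i i) ^ 2 ≤ (M * M).trace := by
    rw [h1]
    refine Finset.sum_le_sum fun i _ => ?_
    calc (M i i) ^ 2 = M i i * M i i := sq (M i i)
      _ ≤ ∑ j, M i j * M j i := by
          refine Finset.single_le_sum (f := fun j => M i j * M j i) (fun j _ => ?_) (Finset.mem_univ i)
          simpa [h2 i j] using mul_self_nonneg (M i j)
  have h4 : (∑ i : Fin n, M i i) ^ 2 ≤ (Finset.univ : Finset (Fin n)).card * ∑ i, (M i i) ^ 2 :=
    sq_sum_le_card_mul_sum_sq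
  have : (M.trace) ^ 2 ≤ (n : ℝ) * ∑ i, (M i i) ^ 2 := by
    simpa [Matrix.trace, Matrix.diag] using h4
  calc (M.trace) ^ 2 ≤ (n : ℝ) * ∑ i, (M i i) ^ 2 := this
    _ ≤ (n : ℝ) * (M * M).trace := by
        exact mul_le_mul_of_nonneg_left h3 (by positivity)

open scoped MatrixOrder in
lemma key_trace_ineq {P : Matrix (Fin n) (Fin n) ℝ} (hP : P.PosSemidef)
    (η : Matrix (Fin n) (Fin n) ℝ) (hη : η.IsSymm) :
    (Matrix.trace (P * η)) ^ 2 ≤ (n : ℝ) * Matrix.trace (P * η * P * η) := by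
  set S := CFC.sqrt P with hSdef
  have hSS : S * S = P := CFC.sqrt_mul_sqrt_self P hP.nonneg
  have hSsymm : S.IsSymm := by
    have h := (CFC.sqrt_nonneg P).posSemidef.1.eq
    rwa [Matrix.conjTranspose_eq_transpose_of_trivial] at h
  set M := S * η * S with hMdef
  have hMsymm : M.IsSymm := by
    unfold Matrix.IsSymm
    rw [hMdef, Matrix.transpose_mul, Matrix.transpose_mul, hSsymm, hη]
    noncomm_ring
  have ht1 : Matrix.trace (P * η) = M.trace := by
    rw [← hSS, hMdef, mul_assoc, Matrix.trace_mul_comm S (S * η), mul_assoc]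
  have ht2 : Matrix.trace (P * η * P * η) = (M * M).trace := by
    have e1 : P * η * P * η = S * (S * η * S * S * η) := by rw [← hSS]; noncomm_ring
    have e2 : S * η * S * S * η * S = M * M := by rw [hMdef]; noncomm_ring
    rw [e1, Matrix.trace_mul_comm, e2]
  rw [ht1, ht2]
  exact trace_sq_le_card_mul_trace_sq M hMsymm

end aux

theorem second_variation_integrand_nonpos
    (n : ℕ) (hn : 1 ≤ n)
    (A : Matrix (Fin n) (Fin n) ℝ) (hA : A.PosDef)
    (η : Matrix (Fin n) (Fin n) ℝ) (hη : η.IsSymm)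
    (w : ℝ → ℝ) (hwpos : ∀ t > (0:ℝ), 0 < w t)
    (hwdiff : ∀ t > (0:ℝ), DifferentiableAt ℝ w t)
    (hA1 : ∀ t > (0:ℝ), deriv w t + (1 - 1 / (n : ℝ)) * w t / t ≤ 0) :
    (deriv w A.det + w A.det / A.det) * (Matrix.trace (A.adjugate * η)) ^ 2 -
        (w A.det / A.det) * Matrix.trace (A.adjugate * η * A.adjugate * η) ≤
      (deriv w A.det + (1 - 1 / (n : ℝ)) * w A.det / A.det) *
        (Matrix.trace (A.adjugate * η)) ^ 2 ∧
    (deriv w A.det + (1 - 1 / (n : ℝ)) * w A.det / A.det) *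
        (Matrix.trace (A.adjugate * η)) ^ 2 ≤ 0 := by
  have hd : 0 < A.det := hA.det_pos
  have hw : 0 < w A.det := hwpos _ hd
  -- adjugate is positive semidefinite
  have hinv : A⁻¹.PosDef := hA.inv
  have hadj : A.adjugate = A.det • A⁻¹ := by
    rw [Matrix.inv_def, Ring.inverse_eq_inv', smul_smul, mul_inv_cancel₀ hd.ne', one_smul]
  have hU : A.adjugate.PosSemidef := by
    rw [hadj]; exact my_smul_posSemidef hinv.posSemidef hd.le
  have hkey := key_trace_ineq hU η hη
  have hnpos : (0:ℝ) < n := by exact_mod_cast hn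
  constructor
  · have h1 : (w A.det / A.det) * ((Matrix.trace (A.adjugate * η)) ^ 2 / n) ≤
        (w A.det / A.det) * Matrix.trace (A.adjugate * η * A.adjugate * η) := by
      apply mul_le_mul_of_nonneg_left _ (by positivity)
      rw [div_le_iff₀ hnpos] at *
      linarith [hkey]
    have e : (deriv w A.det + (1 - 1 / (n:ℝ)) * w A.det / A.det) *
          (Matrix.trace (A.adjugate * η)) ^ 2 =
        (deriv w A.det + w A.det / A.det) * (Matrix.trace (A.adjugate * η)) ^ 2 -
          (w A.det / A.det) * ((Matrix.trace (A.adjugate * η)) ^ 2 / n) := by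
      field_simp
      ring
    linarith [h1]
  · exact mul_nonpos_of_nonpos_of_nonneg (hA1 _ hd) (sq_nonneg _)
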